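/- Let A be a real m×n matrix with m ≤ n and rank(A) = m, let b ∈ ℝ^m (the system Ax = b is then consistent), and let x_LS denote the minimal Euclidean norm solution of Ax = b. Let x^0 ∈ ℝ^n and let (x^k)_{k≥0} be generated by the Maximal Residual Kaczmarz (MRK) algorithm: at step k choose an index i_k ∈ {1,…,m} maximizing |⟨A_i, x^k⟩ − b_i| over i ∈ {1,…,m}, and set x^{k+1} = x^k − ((⟨A_{i_k}, x^k⟩ − b_{i_k})/‖A_{i_k}‖²) A_{i_k}. Assume (as is known for consistent systems) that x^k converges to P_{N(A)}(x^0) + x_LS, where P_{N(A)} is the orthogonal projection onto the null space of A. If P_{R(A^T)}(x^0) − x_LS = Σ_{i=1}^m γ_i A_i with γ_i > 0 for every i = 1,…,m, where P_{R(A^T)} is the orthogonal projection onto the row space of A, then for every i ∈ {1,…,m} there exists k ≥ 0 with i_k = i, i.e., every row index is selected at least once during the MRK iterations. -/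

import Mathlib

open scoped RealInnerProductSpace

set_option maxHeartbeats 1000000

/-- For an underdetermined full row rank system `Ax = b` (rows
`A i` linearly independent, `m ≤ n`), let `xLS` be the minimal Euclidean norm
solution, let `(x k)` be the Maximal Residual Kaczmarz iterates with selected
indices `ι k`, and assume the known convergence `x k → P_{N(A)}(x 0) + xLS`.
If `P_{R(Aᵀ)}(x 0) - xLS = ∑ γ i • A i` with all `γ i > 0`, then every row
index is selected at least once. -/
theorem mrk_selects_every_index
    (m n : ℕ) (hmn : m ≤ n)
    (A : Fin m → EuclideanSpace ℝ (Fin n)) (b : Fin m → ℝ)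
    (hrank : LinearIndependent ℝ A)
    (xLS : EuclideanSpace ℝ (Fin n))
    (hxLS_sol : ∀ i, ⟪A i, xLS⟫ = b i)
    (hxLS_min : ∀ z : EuclideanSpace ℝ (Fin n),
      (∀ i, ⟪A i, z⟫ = b i) → ‖xLS‖ ≤ ‖z‖)
    (x : ℕ → EuclideanSpace ℝ (Fin n)) (ι : ℕ → Fin m)
    (hmax : ∀ k i, |⟪A i, x k⟫ - b i| ≤ |⟪A (ι k), x k⟫ - b (ι k)|)
    (hstep : ∀ k, x (k + 1) =
      x k - ((⟪A (ι k), x k⟫ - b (ι k)) / ‖A (ι k)‖ ^ 2) • A (ι k))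
    (hconv : Filter.Tendsto x Filter.atTop
      (nhds (((Submodule.orthogonalProjectionOnto (Submodule.span ℝ (Set.range A))ᗮ (x 0) :
          EuclideanSpace ℝ (Fin n))) + xLS)))
    (γ : Fin m → ℝ) (hγpos : ∀ i, 0 < γ i)
    (hγ : (Submodule.orthogonalProjectionOnto (Submodule.span ℝ (Set.range A)) (x 0) :
        EuclideanSpace ℝ (Fin n)) - xLS = ∑ i, γ i • A i) :
    ∀ i : Fin m, ∃ k : ℕ, ι k = i := by
  intro i
  by_contra hcon
  push_neg at hcon
  set S := Submodule.span ℝ (Set.range A) with hS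
  set T := Submodule.span ℝ (A '' {i}ᶜ) with hT
  have hAiT : A i ∉ T := hrank.notMem_span_image (by simp)
  set v : EuclideanSpace ℝ (Fin n) := A i - (Submodule.orthogonalProjectionOnto T (A i) : EuclideanSpace ℝ (Fin n)) with hv
  have hvT : v ∈ Tᗮ := Submodule.sub_starProjection_mem_orthogonal (K := T) (A i)
  have hvAj : ∀ j, j ≠ i → ⟪v, A j⟫ = 0 := by
    intro j hj
    have hjT : A j ∈ T := Submodule.subset_span ⟨j, by simp [hj], rfl⟩
    rw [real_inner_comm]
    exact hvT (A j) hjT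
  have hvne : v ≠ 0 := by
    intro h0
    apply hAiT
    have : A i = (Submodule.orthogonalProjectionOnto T (A i) : EuclideanSpace ℝ (Fin n)) := by
      have := sub_eq_zero.mp h0
      exact this
    rw [this]
    exact Submodule.coe_mem _
  have hvAi : ⟪v, A i⟫ = ‖v‖ ^ 2 := by
    have hproj : ⟪v, (Submodule.orthogonalProjectionOnto T (A i) : EuclideanSpace ℝ (Fin n))⟫ = 0 := by
      rw [real_inner_comm]
      exact hvT _ (Submodule.coe_mem _)
    have : A i = v + (Submodule.orthogonalProjectionOnto T (A i) : EuclideanSpace ℝ (Fin n)) := by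
      rw [hv]; abel
    rw [this, inner_add_right, hproj, real_inner_self_eq_norm_sq]
    ring
  -- ⟪v, x k⟫ is constant
  have hconst : ∀ k, ⟪v, x k⟫ = ⟪v, x 0⟫ := by
    intro k
    induction k with
    | zero => rfl
    | succ k ih =>
      rw [hstep k, inner_sub_right, inner_smul_right, hvAj (ι k) (hcon k),
        mul_zero, sub_zero, ih]
  -- limit of ⟪v, x k⟫
  set L : EuclideanSpace ℝ (Fin n) := ((Submodule.orthogonalProjectionOnto Sᗮ (x 0) : EuclideanSpace ℝ (Fin n))) + xLS with hL
  have hlim : Filter.Tendsto (fun k => ⟪v, x k⟫) Filter.atTop (nhds ⟪v, L⟫) :=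
    Filter.Tendsto.inner tendsto_const_nhds hconv
  have hlim' : Filter.Tendsto (fun k => ⟪v, x k⟫) Filter.atTop (nhds ⟪v, x 0⟫) := by
    simp only [hconst]
    exact tendsto_const_nhds
  have heq : ⟪v, x 0⟫ = ⟪v, L⟫ := tendsto_nhds_unique hlim' hlim
  -- decomposition of x 0
  have hdecomp : x 0 = (Submodule.orthogonalProjectionOnto S (x 0) : EuclideanSpace ℝ (Fin n)) +
      (Submodule.orthogonalProjectionOnto Sᗮ (x 0) : EuclideanSpace ℝ (Fin n)) :=
    (Submodule.starProjection_add_starProjection_orthogonal (K := S) (x 0)).symm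
  have hzero : ⟪v, (Submodule.orthogonalProjectionOnto S (x 0) : EuclideanSpace ℝ (Fin n)) - xLS⟫ = 0 := by
    have : ⟪v, x 0⟫ = ⟪v, (Submodule.orthogonalProjectionOnto S (x 0) : EuclideanSpace ℝ (Fin n))⟫ +
        ⟪v, (Submodule.orthogonalProjectionOnto Sᗮ (x 0) : EuclideanSpace ℝ (Fin n))⟫ := by
      conv_lhs => rw [hdecomp]
      rw [inner_add_right]
    rw [inner_sub_right]
    have hL' : ⟪v, L⟫ = ⟪v, (Submodule.orthogonalProjectionOnto Sᗮ (x 0) : EuclideanSpace ℝ (Fin n))⟫ + ⟪v, xLS⟫ := by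
      rw [hL, inner_add_right]
    linarith [heq, this, hL']
  have hpos : ⟪v, (Submodule.orthogonalProjectionOnto S (x 0) : EuclideanSpace ℝ (Fin n)) - xLS⟫ = γ i * ‖v‖ ^ 2 := by
    rw [hγ, inner_sum]
    rw [Finset.sum_eq_single i]
    · rw [inner_smul_right, hvAi]
    · intro j _ hj
      rw [inner_smul_right, hvAj j hj, mul_zero]
    · intro h; exact absurd (Finset.mem_univ i) h
  rw [hpos] at hzero
  have : 0 < γ i * ‖v‖ ^ 2 :=
    mul_pos (hγpos i) (by have := norm_pos_iff.mpr hvne; positivity)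
  linarith
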